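/- Fix a rational $c > 0$. The set of semisimple balanced root systems $\Phi_{1,k_1}\cdots\Phi_{n,k_n}$ of central charge $c$ is finite. -/

import Mathlib

/-- The simple root systems of the standard classification. -/
inductive SimpleRS
  | A (ℓ : ℕ) | B (ℓ : ℕ) | C (ℓ : ℕ) | D (ℓ : ℕ)
  | E6 | E7 | E8 | F4 | G2
  deriving DecidableEq

namespace SimpleRS

/-- Validity of the rank parameter. -/
def valid : SimpleRS → Prop
  | A ℓ => 1 ≤ ℓ
  | B ℓ => 2 ≤ ℓ
  | C ℓ => 3 ≤ ℓ
  | D ℓ => 4 ≤ ℓ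
  | _ => True

/-- Dimension of the corresponding simple Lie algebra. -/
def dim : SimpleRS → ℕ
  | A ℓ => ℓ^2 + 2*ℓ
  | B ℓ => 2*ℓ^2 + ℓ
  | C ℓ => 2*ℓ^2 + ℓ
  | D ℓ => 2*ℓ^2 - ℓ
  | E6 => 78
  | E7 => 133
  | E8 => 248
  | F4 => 52
  | G2 => 14

/-- Dual Coxeter number. -/
def dcox : SimpleRS → ℕ
  | A ℓ => ℓ + 1
  | B ℓ => 2*ℓ - 1
  | C ℓ => ℓ + 1
  | D ℓ => 2*ℓ - 2
  | E6 => 12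
  | E7 => 18
  | E8 => 30
  | F4 => 9
  | G2 => 4

end SimpleRS

namespace SimpleRS

lemma one_le_dcox' {Φ : SimpleRS} (h : Φ.valid) : 1 ≤ Φ.dcox := by
  cases Φ <;> simp_all [valid, dcox] <;> omega

lemma one_le_dim' {Φ : SimpleRS} (h : Φ.valid) : 1 ≤ Φ.dim := by
  cases Φ with
  | A ℓ => simp only [valid] at h; simp only [dim]; nlinarith
  | B ℓ => simp only [valid] at h; simp only [dim]; nlinarith
  | C ℓ => simp only [valid] at h; simp only [dim]; nlinarith
  | D ℓ =>
    simp only [valid] at h; simp only [dim]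
    have := Nat.le_self_pow two_ne_zero ℓ
    omega
  | E6 => simp [dim]
  | E7 => simp [dim]
  | E8 => simp [dim]
  | F4 => simp [dim]
  | G2 => simp [dim]

/-- Minimal contribution bound: the contribution at level `k ≥ 1` is at least `d/(1+h)`. -/
lemma dim_le_of_contrib_le {c : ℚ} (Φ : SimpleRS) (k : ℕ+)
    (hle : (k : ℚ) * Φ.dim / ((k : ℚ) + Φ.dcox) ≤ c) :
    (Φ.dim : ℚ) ≤ c * (1 + Φ.dcox) := by
  have hk1 : (1 : ℚ) ≤ (k : ℚ) := by exact_mod_cast k.one_le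
  have hh0 : (0 : ℚ) ≤ (Φ.dcox : ℚ) := Nat.cast_nonneg _
  have hd0 : (0 : ℚ) ≤ (Φ.dim : ℚ) := Nat.cast_nonneg _
  have hden : (0 : ℚ) < (k : ℚ) + Φ.dcox := by linarith
  rw [div_le_iff₀ hden] at hle
  nlinarith [mul_nonneg hd0 hh0, mul_nonneg (mul_nonneg hd0 hh0) (sub_nonneg.2 hk1)]

/-- Bounds on `dcox` and `dim` from the contribution bound. -/
lemma bounds_of_dim_le {c : ℚ} (hc : 0 < c) {Φ : SimpleRS} (hv : Φ.valid)
    (h : (Φ.dim : ℚ) ≤ c * (1 + Φ.dcox)) :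
    Φ.dcox ≤ 2 * ⌈c⌉₊ + 30 ∧ Φ.dim ≤ 2 * ⌈c⌉₊ ^ 2 + 2 * ⌈c⌉₊ + 248 := by
  set B := ⌈c⌉₊ with hB
  have hcB : c ≤ (B : ℚ) := Nat.le_ceil c
  -- helper to turn `(ℓ:ℚ) ≤ c` into `ℓ ≤ B`
  have key : ∀ ℓ : ℕ, (ℓ : ℚ) ≤ c → ℓ ≤ B := by
    intro ℓ hl
    exact_mod_cast hl.trans hcB
  cases Φ with
  | A ℓ =>
    simp only [valid] at hv
    simp only [dim, dcox] at h ⊢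
    push_cast at h
    have hl : (ℓ : ℚ) ≤ c := by
      have hℓ0 : (0 : ℚ) < (ℓ : ℚ) + 2 := by positivity
      nlinarith
    have hB' := key ℓ hl
    have h2 : ℓ ^ 2 ≤ B ^ 2 := Nat.pow_le_pow_left hB' 2
    constructor <;> nlinarith
  | B ℓ =>
    simp only [valid] at hv
    simp only [dim, dcox] at h ⊢
    have hc2 : 2 ≤ 2 * ℓ := by omega
    have hc1 : 1 ≤ 2 * ℓ - 1 + 1 := by omega
    have hcast : ((2 * ℓ - 1 : ℕ) : ℚ) = 2 * (ℓ : ℚ) - 1 := by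
      have : (2 * ℓ - 1 : ℕ) + 1 = 2 * ℓ := by omega
      have := congrArg (fun n : ℕ => (n : ℚ)) this
      push_cast at this
      linarith
    rw [hcast] at h
    push_cast at h
    have hl : (ℓ : ℚ) ≤ c := by
      have hℓq : (2 : ℚ) ≤ (ℓ : ℚ) := by exact_mod_cast hv
      nlinarith
    have hB' := key ℓ hl
    have h2 : ℓ ^ 2 ≤ B ^ 2 := Nat.pow_le_pow_left hB' 2
    constructor
    · omega
    · nlinarith
  | C ℓ =>
    simp only [valid] at hv
    simp only [dim, dcox] at h ⊢
    push_cast at h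
    have hl : (ℓ : ℚ) ≤ c := by
      have hℓq : (3 : ℚ) ≤ (ℓ : ℚ) := by exact_mod_cast hv
      nlinarith
    have hB' := key ℓ hl
    have h2 : ℓ ^ 2 ≤ B ^ 2 := Nat.pow_le_pow_left hB' 2
    constructor <;> nlinarith
  | D ℓ =>
    simp only [valid] at hv
    simp only [dim, dcox] at h ⊢
    have hs1 : ℓ ≤ 2 * ℓ ^ 2 := by nlinarith
    have hs2 : 2 ≤ 2 * ℓ := by omega
    have hcast1 : ((2 * ℓ ^ 2 - ℓ : ℕ) : ℚ) = 2 * (ℓ : ℚ) ^ 2 - ℓ := by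
      push_cast [Nat.cast_sub hs1]; ring
    have hcast2 : ((2 * ℓ - 2 : ℕ) : ℚ) = 2 * (ℓ : ℚ) - 2 := by
      push_cast [Nat.cast_sub hs2]; ring
    rw [hcast1, hcast2] at h
    have hl : (ℓ : ℚ) ≤ c := by
      have hℓq : (4 : ℚ) ≤ (ℓ : ℚ) := by exact_mod_cast hv
      nlinarith
    have hB' := key ℓ hl
    have h2 : ℓ ^ 2 ≤ B ^ 2 := Nat.pow_le_pow_left hB' 2
    constructor
    · omega
    · omega
  | E6 => exact ⟨by simp only [dcox]; omega, by simp only [dim]; omega⟩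
  | E7 => exact ⟨by simp only [dcox]; omega, by simp only [dim]; omega⟩
  | E8 => exact ⟨by simp only [dcox]; omega, by simp only [dim]; omega⟩
  | F4 => exact ⟨by simp only [dcox]; omega, by simp only [dim]; omega⟩
  | G2 => exact ⟨by simp only [dcox]; omega, by simp only [dim]; omega⟩

end SimpleRS

open SimpleRS in
/-- All simple root systems of dimension at most `D` lie in an explicit finset. -/
lemma SimpleRS.mem_finset_of_dim_le (D : ℕ) {Φ : SimpleRS} (h : Φ.dim ≤ D) :
    Φ ∈ ((Finset.range (D + 1)).image SimpleRS.A ∪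
         (Finset.range (D + 1)).image SimpleRS.B ∪
         (Finset.range (D + 1)).image SimpleRS.C ∪
         (Finset.range (D + 1)).image SimpleRS.D ∪
         ({SimpleRS.E6, SimpleRS.E7, SimpleRS.E8, SimpleRS.F4, SimpleRS.G2} :
            Finset SimpleRS)) := by
  simp only [Finset.mem_union, Finset.mem_image, Finset.mem_range, Finset.mem_insert,
    Finset.mem_singleton]
  cases Φ with
  | A ℓ =>
    refine Or.inl (Or.inl (Or.inl (Or.inl ⟨ℓ, ?_, rfl⟩)))
    simp only [dim] at h; nlinarith
  | B ℓ =>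
    refine Or.inl (Or.inl (Or.inl (Or.inr ⟨ℓ, ?_, rfl⟩)))
    simp only [dim] at h; nlinarith
  | C ℓ =>
    refine Or.inl (Or.inl (Or.inr ⟨ℓ, ?_, rfl⟩))
    simp only [dim] at h; nlinarith
  | D ℓ =>
    refine Or.inl (Or.inr ⟨ℓ, ?_, rfl⟩)
    simp only [dim] at h
    have : ℓ ≤ ℓ ^ 2 := Nat.le_self_pow two_ne_zero ℓ
    omega
  | E6 => tauto
  | E7 => tauto
  | E8 => tauto
  | F4 => tauto
  | G2 => tauto

set_option maxHeartbeats 1000000 in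
/-- For a fixed rational `c > 0`, the set of semisimple balanced root systems
`Φ_{1,k_1}…Φ_{n,k_n}` of central charge `c` is finite. -/
theorem semisimple_balanced_finite (c : ℚ) (hc : 0 < c) :
    {s : Multiset (SimpleRS × ℕ+) |
      (∀ p ∈ s, p.1.valid) ∧
      c = (s.map fun p => (p.2 : ℚ) * p.1.dim / ((p.2 : ℚ) + p.1.dcox)).sum ∧
      (∀ p ∈ s, c * p.1.dcox / (p.2 : ℚ) =
        (s.map fun p => (p.1.dim : ℚ)).sum - c)}.Finite := by
  classical
  set B : ℕ := ⌈c⌉₊ with hBdef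
  set H : ℕ := 2 * B + 30 with hHdef
  set Dm : ℕ := 2 * B ^ 2 + 2 * B + 248 with hDmdef
  set ε : ℚ := (⌊c⌋₊ + 1 : ℚ) - c with hεdef
  have hε : 0 < ε := by
    have := Nat.lt_floor_add_one c
    simpa [hεdef] using this
  set K : ℕ := ⌈c * (H : ℚ) / ε⌉₊ with hKdef
  set N : ℕ := ⌈c * (1 + (H : ℚ))⌉₊ with hNdef
  -- the ambient finset of allowed pairs
  set PΦ : Finset SimpleRS :=
    ((Finset.range (Dm + 1)).image SimpleRS.A ∪
     (Finset.range (Dm + 1)).image SimpleRS.B ∪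
     (Finset.range (Dm + 1)).image SimpleRS.C ∪
     (Finset.range (Dm + 1)).image SimpleRS.D ∪
     ({SimpleRS.E6, SimpleRS.E7, SimpleRS.E8, SimpleRS.F4, SimpleRS.G2} :
        Finset SimpleRS)) with hPΦ
  set P : Finset (SimpleRS × ℕ+) := PΦ ×ˢ Finset.Icc 1 (Nat.succPNat K)
    with hPdef
  set M : Multiset (SimpleRS × ℕ+) := N • P.val with hM
  apply Set.Finite.subset (M.powerset.toFinset.finite_toSet)
  rintro s ⟨hval, hsum, hbal⟩
  -- nonemptiness
  have hne : s ≠ 0 := by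
    rintro rfl
    simp at hsum
    exact absurd hsum hc.ne'
  obtain ⟨p0, hp0⟩ := Multiset.exists_mem_of_ne_zero hne
  -- every contribution is nonneg
  have hnn : ∀ x ∈ s.map fun p : SimpleRS × ℕ+ =>
      (p.2 : ℚ) * p.1.dim / ((p.2 : ℚ) + p.1.dcox), 0 ≤ x := by
    intro x hx
    obtain ⟨p, _, rfl⟩ := Multiset.mem_map.1 hx
    have : (0 : ℚ) < (p.2 : ℚ) := by exact_mod_cast p.2.pos
    positivity
  -- each contribution is at most c
  have hcontrib : ∀ p ∈ s, (p.2 : ℚ) * p.1.dim / ((p.2 : ℚ) + p.1.dcox) ≤ c := by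
    intro p hp
    rw [hsum]
    exact Multiset.single_le_sum hnn _ (Multiset.mem_map_of_mem _ hp)
  -- bounds on dcox and dim of members
  have hbounds : ∀ p ∈ s, p.1.dcox ≤ H ∧ p.1.dim ≤ Dm := by
    intro p hp
    exact SimpleRS.bounds_of_dim_le hc (hval p hp)
      (SimpleRS.dim_le_of_contrib_le p.1 p.2 (hcontrib p hp))
  -- total dimension as a natural number
  set Dnat : ℕ := (s.map fun p : SimpleRS × ℕ+ => p.1.dim).sum with hDnat
  have hcast : (s.map fun p : SimpleRS × ℕ+ => (p.1.dim : ℚ)).sum = (Dnat : ℚ) := by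
    rw [hDnat, Nat.cast_multiset_sum, Multiset.map_map]
    rfl
  -- the balance equation for each member
  have hbal' : ∀ p ∈ s, c * p.1.dcox / (p.2 : ℚ) = (Dnat : ℚ) - c := by
    intro p hp
    rw [← hcast]
    exact hbal p hp
  -- Dnat > c
  have hDgt : c < (Dnat : ℚ) := by
    have h1 := hbal' p0 hp0
    have hh : (1 : ℚ) ≤ (p0.1.dcox : ℚ) := by
      exact_mod_cast SimpleRS.one_le_dcox' (hval p0 hp0)
    have hk : (0 : ℚ) < (p0.2 : ℚ) := by exact_mod_cast p0.2.pos
    have : 0 < c * p0.1.dcox / (p0.2 : ℚ) := by positivity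
    linarith [h1 ▸ this]
  have hεD : ε ≤ (Dnat : ℚ) - c := by
    have : ⌊c⌋₊ < Dnat := (Nat.floor_lt hc.le).2 hDgt
    have : (⌊c⌋₊ + 1 : ℚ) ≤ (Dnat : ℚ) := by exact_mod_cast this
    simp only [hεdef]; linarith
  -- level bound
  have hkbound : ∀ p ∈ s, (p.2 : ℕ) ≤ K := by
    intro p hp
    have h1 := hbal' p hp
    have hk : (0 : ℚ) < (p.2 : ℚ) := by exact_mod_cast p.2.pos
    have hH : (p.1.dcox : ℚ) ≤ (H : ℚ) := by exact_mod_cast (hbounds p hp).1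
    have h2 : c * p.1.dcox = ((Dnat : ℚ) - c) * (p.2 : ℚ) := by
      field_simp at h1
      linarith [h1]
    have h3 : ε * (p.2 : ℚ) ≤ c * (H : ℚ) := by
      have : ε * (p.2 : ℚ) ≤ ((Dnat : ℚ) - c) * (p.2 : ℚ) :=
        mul_le_mul_of_nonneg_right hεD hk.le
      have hcH : c * (p.1.dcox : ℚ) ≤ c * (H : ℚ) :=
        mul_le_mul_of_nonneg_left hH hc.le
      linarith
    have h4 : (p.2 : ℚ) ≤ c * (H : ℚ) / ε := by
      rw [le_div_iff₀ hε]
      linarith [h3, mul_comm ε (p.2 : ℚ)]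
    have h5 : ((p.2 : ℕ) : ℚ) ≤ (K : ℚ) := by
      have := Nat.le_ceil (c * (H : ℚ) / ε)
      push_cast
      exact le_trans h4 this
    exact_mod_cast h5
  -- bound on Dnat, hence on card
  have hDle : Dnat ≤ N := by
    have h1 := hbal' p0 hp0
    have hk1 : (1 : ℚ) ≤ (p0.2 : ℚ) := by exact_mod_cast p0.2.one_le
    have hH : (p0.1.dcox : ℚ) ≤ (H : ℚ) := by exact_mod_cast (hbounds p0 hp0).1
    have hh0 : (0 : ℚ) ≤ (p0.1.dcox : ℚ) := Nat.cast_nonneg _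
    have hle : c * p0.1.dcox / (p0.2 : ℚ) ≤ c * (H : ℚ) := by
      have h2 : c * p0.1.dcox / (p0.2 : ℚ) ≤ c * p0.1.dcox / 1 :=
        div_le_div_of_nonneg_left (by positivity) one_pos hk1
      simp only [div_one] at h2
      exact h2.trans (mul_le_mul_of_nonneg_left hH hc.le)
    have : (Dnat : ℚ) ≤ c * (1 + (H : ℚ)) := by
      rw [h1] at hle
      ring_nf
      ring_nf at hle
      linarith
    rw [hNdef]
    exact_mod_cast this.trans (Nat.le_ceil _)
  have hcard : Multiset.card s ≤ N := by
    refine le_trans ?_ hDle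
    rw [hDnat]
    have h1 : (Multiset.card (s.map fun p : SimpleRS × ℕ+ => p.1.dim)) • 1 ≤
        (s.map fun p : SimpleRS × ℕ+ => p.1.dim).sum := by
      refine Multiset.card_nsmul_le_sum ?_
      intro x hx
      obtain ⟨p, hp, rfl⟩ := Multiset.mem_map.1 hx
      exact SimpleRS.one_le_dim' (hval p hp)
    simpa using h1
  -- membership of each element of s in P
  have hmemP : ∀ p ∈ s, p ∈ P := by
    intro p hp
    rw [hPdef, Finset.mem_product]
    constructor
    · exact SimpleRS.mem_finset_of_dim_le Dm (hbounds p hp).2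
    · rw [Finset.mem_Icc]
      refine ⟨p.2.one_le, ?_⟩
      have : (p.2 : ℕ) ≤ K + 1 := le_trans (hkbound p hp) (Nat.le_succ K)
      exact this
  -- conclude: s ≤ M
  simp only [Finset.coe_sort_coe, Multiset.mem_toFinset, Set.mem_setOf_eq,
    Finset.mem_coe, Multiset.mem_powerset]
  rw [Multiset.le_iff_count]
  intro x
  rw [hM, Multiset.count_nsmul]
  by_cases hx : x ∈ s
  · have hxP : x ∈ P := hmemP x hx
    have h1 : 1 ≤ Multiset.count x P.val := (Multiset.one_le_count_iff_mem).2 (Finset.mem_def.1 hxP)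
    calc Multiset.count x s ≤ Multiset.card s := Multiset.count_le_card x s
      _ ≤ N := hcard
      _ = N * 1 := (Nat.mul_one N).symm
      _ ≤ N * Multiset.count x P.val := Nat.mul_le_mul_left N h1
  · simp [Multiset.count_eq_zero_of_notMem hx]
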